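/- Let C be an LD-set for Q with minorizing constant ε⁻_C and measure λ_C. Then for any probability measure ν on (X,𝒳), any n ≥ 1 and any nonnegative measurable functions g_0,…,g_n on X, E^Q_ν[∏_{i=0}^n g_i(X_i)] ≥ (ε⁻_C)^{n−1} · ν(g_0 · Q(g_1 1_C)) · ∏_{i=2}^n λ_C(g_i 1_C). -/

import Mathlib

open MeasureTheory ProbabilityTheory
open scoped ENNReal

/-- A set `C` is a local Doeblin (LD) set for the kernel `Q`, with minorizing/majorizing
measure `lam` and constants `em, ep`. -/
def IsLDSet {X : Type*} [MeasurableSpace X] (Q : Kernel X X) (C : Set X)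
    (lam : Measure X) (em ep : ℝ) : Prop :=
  MeasurableSet C ∧ 0 < lam C ∧ 0 < em ∧ 0 < ep ∧
    ∀ x ∈ C, ∀ A : Set X, MeasurableSet A →
      ENNReal.ofReal em * lam (A ∩ C) ≤ Q x (A ∩ C) ∧
        Q x (A ∩ C) ≤ ENNReal.ofReal ep * lam (A ∩ C)

/-- The law of the Markov chain with kernel `Q` and initial distribution `ν`, realized as a
measure on `ℕ → X`: `pathMeasure Q ν n` carries the joint law of the first `n+1`
coordinates (coordinates beyond `n` are frozen copies). -/
noncomputable def pathMeasure {X : Type*} [MeasurableSpace X] (Q : Kernel X X)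
    (ν : Measure X) : ℕ → Measure (ℕ → X)
  | 0 => ν.map (fun x _ => x)
  | n + 1 => (pathMeasure Q ν n).bind
      (fun ω => (Q (ω n)).map (fun x' => Function.update ω (n + 1) x'))

lemma measurable_pathFamily {X : Type*} [MeasurableSpace X] (Q : Kernel X X)
    [IsMarkovKernel Q] (n : ℕ) :
    Measurable (fun ω : ℕ → X => (Q (ω n)).map (fun x' => Function.update ω (n+1) x')) := by
  rw [Measure.measurable_measure]
  intro s hs
  have heq : ∀ ω : ℕ → X, (Q (ω n)).map (fun x' => Function.update ω (n+1) x') s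
      = Q (ω n) ((fun x' => Function.update ω (n+1) x') ⁻¹' s) := fun ω =>
    Measure.map_apply (measurable_update _) hs
  simp_rw [heq]
  have ht : MeasurableSet {p : (ℕ → X) × X | Function.update p.1 (n+1) p.2 ∈ s} :=
    measurable_update' hs
  have := Kernel.measurable_kernel_prodMk_left
    (κ := Q.comap (fun ω : ℕ → X => ω n) (measurable_pi_apply n)) ht
  simpa [Kernel.comap_apply, Set.preimage] using this

lemma measurable_innerIntegral {X : Type*} [MeasurableSpace X] (Q : Kernel X X)
    [IsMarkovKernel Q] (n : ℕ) {F : (ℕ → X) → ℝ≥0∞} (hF : Measurable F) :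
    Measurable fun ω : ℕ → X => ∫⁻ x', F (Function.update ω (n + 1) x') ∂(Q (ω n)) := by
  have h : Measurable (Function.uncurry
      fun (ω : ℕ → X) (x' : X) => F (Function.update ω (n + 1) x')) :=
    hF.comp measurable_update'
  have := h.lintegral_kernel_prod_right
    (κ := Q.comap (fun ω : ℕ → X => ω n) (measurable_pi_apply n))
  simpa [Kernel.comap_apply] using this

lemma lintegral_pathMeasure_zero {X : Type*} [MeasurableSpace X] (Q : Kernel X X)
    (ν : Measure X) {F : (ℕ → X) → ℝ≥0∞} (hF : Measurable F) :
    ∫⁻ ω, F ω ∂(pathMeasure Q ν 0) = ∫⁻ x, F (fun _ => x) ∂ν := by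
  rw [pathMeasure]
  exact lintegral_map hF (measurable_pi_lambda _ fun _ => measurable_id)

lemma lintegral_pathMeasure_succ {X : Type*} [MeasurableSpace X] (Q : Kernel X X)
    [IsMarkovKernel Q] (ν : Measure X) (n : ℕ) {F : (ℕ → X) → ℝ≥0∞} (hF : Measurable F) :
    ∫⁻ ω, F ω ∂(pathMeasure Q ν (n + 1))
      = ∫⁻ ω, ∫⁻ x', F (Function.update ω (n + 1) x') ∂(Q (ω n)) ∂(pathMeasure Q ν n) := by
  rw [pathMeasure, Measure.lintegral_bind (measurable_pathFamily Q n).aemeasurable hF.aemeasurable]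
  refine lintegral_congr fun ω => ?_
  rw [lintegral_map hF (measurable_update _)]

lemma minorize_lintegral {X : Type*} [MeasurableSpace X] {Q : Kernel X X}
    {C : Set X} {lam : Measure X} {em ep : ℝ} (hC : IsLDSet Q C lam em ep)
    {x : X} (hx : x ∈ C) (f : X → ℝ≥0∞) :
    ENNReal.ofReal em * ∫⁻ y in C, f y ∂lam ≤ ∫⁻ y in C, f y ∂(Q x) := by
  rw [← smul_eq_mul, ← lintegral_smul_measure]
  refine lintegral_mono' ?_ le_rfl
  rw [← Measure.restrict_smul, Measure.le_iff]
  intro s hs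
  rw [Measure.restrict_apply hs, Measure.restrict_apply hs, Measure.smul_apply,
    smul_eq_mul]
  exact (hC.2.2.2.2 x hx s hs).1


/-- for an LD-set `C`, any probability measure `ν`, any `n ≥ 1` and any
nonnegative measurable functions `g_0,…,g_n`,
`E^Q_ν[∏_{i=0}^n g_i(X_i)] ≥ (ε⁻_C)^{n−1} ν(g₀ · Q(g₁ 1_C)) ∏_{i=2}^n λ_C(g_i 1_C)`. -/
theorem forgetting_hmm_stmt3 {X : Type*} [MeasurableSpace X]
    (Q : Kernel X X) [IsMarkovKernel Q]
    (C : Set X) (lam : Measure X) (em ep : ℝ) (hC : IsLDSet Q C lam em ep)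
    (ν : Measure X) [IsProbabilityMeasure ν]
    (n : ℕ) (hn : 1 ≤ n)
    (g : ℕ → X → ℝ≥0∞) (hg : ∀ i, Measurable (g i)) :
    ENNReal.ofReal em ^ (n - 1) *
        (∫⁻ x0, g 0 x0 * ∫⁻ x1 in C, g 1 x1 ∂(Q x0) ∂ν) *
        ∏ i ∈ Finset.Icc 2 n, ∫⁻ x in C, g i x ∂lam
      ≤ ∫⁻ ω, ∏ i ∈ Finset.range (n + 1), g i (ω i) ∂(pathMeasure Q ν n) := by
  classical
  set h : ℕ → X → ℝ≥0∞ := fun i => if i = 0 then g 0 else C.indicator (g i) with hh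
  have hmeasC : MeasurableSet C := hC.1
  have hhm : ∀ i, Measurable (h i) := by
    intro i
    by_cases hi : i = 0 <;> simp [hh, hi, (hg i).indicator hmeasC, hg 0]
  have hprodm : ∀ m : ℕ, Measurable fun ω : ℕ → X => ∏ i ∈ Finset.range m, h i (ω i) :=
    fun m => Finset.measurable_prod _ fun i _ => (hhm i).comp (measurable_pi_apply i)
  have key : ∀ m : ℕ, 1 ≤ m →
      ENNReal.ofReal em ^ (m - 1) *
        (∫⁻ x0, g 0 x0 * ∫⁻ x1 in C, g 1 x1 ∂(Q x0) ∂ν) *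
        ∏ i ∈ Finset.Icc 2 m, ∫⁻ x in C, g i x ∂lam
      ≤ ∫⁻ ω, ∏ i ∈ Finset.range (m + 1), h i (ω i) ∂(pathMeasure Q ν m) := by
    intro m hm
    induction m, hm using Nat.le_induction with
    | base =>
      rw [lintegral_pathMeasure_succ Q ν 0 (hprodm 2),
        lintegral_pathMeasure_zero Q ν (measurable_innerIntegral Q 0 (hprodm 2))]
      simp only [Finset.prod_range_succ, Finset.prod_range_zero, one_mul, zero_add]
      have heval : ∀ x : X, (∫⁻ x', h 0 (Function.update (fun _ => x) 1 x' 0) *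
          h 1 (Function.update (fun _ => x) 1 x' 1) ∂(Q x))
          = g 0 x * ∫⁻ x1 in C, g 1 x1 ∂(Q x) := by
        intro x
        simp only [Function.update_self, Function.update_of_ne (by norm_num : (0:ℕ) ≠ 1)]
        rw [lintegral_const_mul _ (hhm 1)]
        simp [hh, lintegral_indicator hmeasC]
      rw [lintegral_congr heval]
      simp
    | succ m hm ih =>
      rw [lintegral_pathMeasure_succ Q ν m (hprodm (m + 2))]
      have hstep : ∀ ω : ℕ → X,
          (∏ i ∈ Finset.range (m + 1), h i (ω i)) *
            (ENNReal.ofReal em * ∫⁻ x in C, g (m + 1) x ∂lam)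
          ≤ ∫⁻ x', ∏ i ∈ Finset.range (m + 2),
              h i (Function.update ω (m + 1) x' i) ∂(Q (ω m)) := by
        intro ω
        have hsplit : ∀ x' : X, (∏ i ∈ Finset.range (m + 2),
            h i (Function.update ω (m + 1) x' i))
            = (∏ i ∈ Finset.range (m + 1), h i (ω i)) * h (m + 1) x' := by
          intro x'
          rw [Finset.prod_range_succ, Function.update_self]
          congr 1
          refine Finset.prod_congr rfl fun i hi => ?_
          rw [Function.update_of_ne (Nat.ne_of_lt (Finset.mem_range.1 hi))]
        simp only [hsplit]
        rw [lintegral_const_mul _ (hhm (m + 1))]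
        by_cases hωC : ω m ∈ C
        · refine mul_le_mul_right ?_ _
          have hind : (∫⁻ x', h (m + 1) x' ∂(Q (ω m)))
              = ∫⁻ x in C, g (m + 1) x ∂(Q (ω m)) := by
            simp only [hh]
            rw [if_neg (by omega), lintegral_indicator hmeasC]
          rw [hind]
          exact minorize_lintegral hC hωC _
        · have hz : h m (ω m) = 0 := by
            simp only [hh, if_neg (by omega : ¬ m = 0)]
            exact Set.indicator_of_notMem hωC _
          rw [Finset.prod_eq_zero (Finset.self_mem_range_succ m) hz]
          simp
      calc ENNReal.ofReal em ^ (m + 1 - 1) *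
            (∫⁻ x0, g 0 x0 * ∫⁻ x1 in C, g 1 x1 ∂(Q x0) ∂ν) *
            ∏ i ∈ Finset.Icc 2 (m + 1), ∫⁻ x in C, g i x ∂lam
          = (ENNReal.ofReal em ^ (m - 1) *
              (∫⁻ x0, g 0 x0 * ∫⁻ x1 in C, g 1 x1 ∂(Q x0) ∂ν) *
              ∏ i ∈ Finset.Icc 2 m, ∫⁻ x in C, g i x ∂lam) *
              (ENNReal.ofReal em * ∫⁻ x in C, g (m + 1) x ∂lam) := by
            rw [Finset.prod_Icc_succ_top (by omega : 2 ≤ m + 1)]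
            have hmm : m + 1 - 1 = (m - 1) + 1 := by omega
            rw [hmm, pow_succ]
            ring
        _ ≤ (∫⁻ ω, ∏ i ∈ Finset.range (m + 1), h i (ω i) ∂(pathMeasure Q ν m)) *
              (ENNReal.ofReal em * ∫⁻ x in C, g (m + 1) x ∂lam) :=
            mul_le_mul_left ih _
        _ = ∫⁻ ω, (∏ i ∈ Finset.range (m + 1), h i (ω i)) *
              (ENNReal.ofReal em * ∫⁻ x in C, g (m + 1) x ∂lam)
              ∂(pathMeasure Q ν m) :=
            (lintegral_mul_const _ (hprodm (m + 1))).symm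
        _ ≤ _ := lintegral_mono fun ω => hstep ω
  refine le_trans (key n hn) (lintegral_mono fun ω => Finset.prod_le_prod' fun i _ => ?_)
  by_cases hi : i = 0
  · simp [hh, hi]
  · simp only [hh, if_neg hi]
    exact Set.indicator_le_self _ _ _
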